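/- arXiv:1507.08329 — 2 statements merged into one kernel-verified Lean document; each statement's English description precedes it below -/
import Mathlib

section
/- Let s ∈ (0,d) and let μ be a finite nice measure on ℝ^d. For each ε > 0 there exists p = p(ε, d, s) ≥ 2 and a constant C = C(ε, d, s) > 0 such that Σ_{Q ∈ 𝒟} D_μ(3Q)^p μ(3Q) ≤ C Σ_{Q ∈ 𝒟, Q ε-regular for μ} D_μ(3Q)^p μ(3Q). -/
open MeasureTheory Metric Set
open scoped ENNReal NNReal Classical

noncomputable section

abbrev Euc (d : ℕ) : Type := EuclideanSpace ℝ (Fin d)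
abbrev CVec (dd : ℕ) : Type := EuclideanSpace ℂ (Fin dd)

variable {d dd : ℕ} {V : Type*} [NormedAddCommGroup V] [NormedSpace ℝ V]

/-- The closed support of a measure. -/
def msupp (μ : Measure (Euc d)) : Set (Euc d) :=
  {x | ∀ r : ℝ, 0 < r → 0 < μ (ball x r)}

/-- `μ(B(x,r)) ≤ Λ r^s` for all balls. -/
def IsNice (s Λ : ℝ) (μ : Measure (Euc d)) : Prop :=
  ∀ (x : Euc d) (r : ℝ), 0 < r → μ (ball x r) ≤ ENNReal.ofReal (Λ * r ^ s)

/-- Λ-AD-regularity. -/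
def IsADReg (s Λ : ℝ) (μ : Measure (Euc d)) : Prop :=
  IsNice s Λ μ ∧ ∀ x ∈ msupp μ, ∀ r : ℝ, 0 < r → ENNReal.ofReal (r ^ s / Λ) ≤ μ (ball x r)

/-- `(x,y) ↦ |x-y|^{-(s-1)}` is locally integrable w.r.t. `μ × μ`. -/
def Diffuse (s : ℝ) (μ : Measure (Euc d)) : Prop :=
  ∀ C : Set (Euc d × Euc d), IsCompact C →
    (∫⁻ p in C, edist p.1 p.2 ^ ((1 : ℝ) - s) ∂μ.prod μ) < ⊤

def RestrictedGrowth (s α : ℝ) (μ : Measure (Euc d)) : Prop :=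
  (∫⁻ x in {x : Euc d | 1 ≤ ‖x‖}, ENNReal.ofReal (‖x‖ ^ (-(s + α))) ∂μ) < ⊤

/-- compactly supported Lipschitz function. -/
def LipCS (f : Euc d → ℝ) : Prop :=
  (∃ L : ℝ≥0, LipschitzWith L f) ∧ HasCompactSupport f

/-- the bilinear form `⟨T(fμ), φ⟩_μ`. -/
def pairK (K : Euc d → V) (μ : Measure (Euc d)) (f φ : Euc d → ℝ) : V :=
  ∫ p : Euc d × Euc d, ((f p.2 * φ p.1 - φ p.2 * f p.1) / 2) • K (p.1 - p.2) ∂μ.prod μ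

/-- `⟨T(fμ), 1⟩_μ`, computed with the auxiliary cutoff `ψ`. -/
def pairOne (K : Euc d → V) (μ : Measure (Euc d)) (f ψ : Euc d → ℝ) : V :=
  pairK K μ f ψ + ∫ x, (1 - ψ x) • (∫ y, f y • K (x - y) ∂μ) ∂μ

/-- `ψ ≡ 1` on a neighbourhood of the support of `f`. -/
def OneOnNbhd (f ψ : Euc d → ℝ) : Prop :=
  ∃ U : Set (Euc d), IsOpen U ∧ tsupport f ⊆ U ∧ Set.EqOn ψ 1 U

def Reflectionless (s α : ℝ) (K : Euc d → V) (μ : Measure (Euc d)) : Prop :=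
  Diffuse s μ ∧ RestrictedGrowth s α μ ∧
    ∀ f : Euc d → ℝ, LipCS f → (∫ x, f x ∂μ) = 0 →
      ∀ ψ : Euc d → ℝ, LipCS ψ → OneOnNbhd f ψ → pairOne K μ f ψ = 0

def IsCZKernel (s α : ℝ) (K : Euc d → V) : Prop :=
  (∀ x : Euc d, x ≠ 0 → ‖K x‖ ≤ ‖x‖ ^ (-s)) ∧
  (∀ x : Euc d, x ≠ 0 → K (-x) = -K x) ∧
  (∃ C : ℝ≥0, HolderOnWith C (Real.toNNReal α)
      (fun x : Euc d => (‖x‖ ^ (s + α)) • K x) {x : Euc d | x ≠ 0}) ∧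
  (∀ x : Euc d, x ≠ 0 → ∀ lam : ℝ, 0 < lam → K (lam • x) = (lam ^ (-s)) • K x)

/-- The regularized kernel `K_δ`. -/
def Kdel (s α : ℝ) (K : Euc d → V) (δ : ℝ) (x : Euc d) : V :=
  if x = 0 then 0 else ((‖x‖ / max ‖x‖ δ) ^ (s + α)) • K x

/-- `sup_{δ>0} ‖T_{μ,δ}‖_{L²(μ)→L²(μ)} ≤ N`. -/
def BddInL2 (s α : ℝ) (K : Euc d → V) (μ : Measure (Euc d)) (N : ℝ) : Prop :=
  ∀ δ : ℝ, 0 < δ → ∀ f : Euc d → ℝ, MemLp f 2 μ →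
    (∫⁻ x, (‖∫ y, f y • Kdel s α K δ (x - y) ∂μ‖₊ : ℝ≥0∞) ^ 2 ∂μ)
      ≤ ENNReal.ofReal (N ^ 2) * ∫⁻ x, (‖f x‖₊ : ℝ≥0∞) ^ 2 ∂μ

/-- The `p`-Wolff potential. -/
def Wolff (s p : ℝ) (ν : Measure (Euc d)) (x : Euc d) : ℝ≥0∞ :=
  ∫⁻ r in Ioi (0 : ℝ), (ν (ball x r) / ENNReal.ofReal (r ^ s)) ^ p / ENNReal.ofReal r

/-- the open cube with center `c` and sidelength `l`. -/
def cube (c : Euc d) (l : ℝ) : Set (Euc d) := {y | ∀ i, |y i - c i| < l / 2}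

/-- A dyadic cube `2^n(k + (0,1)^d)` is encoded by the pair `(n, k)`. -/
abbrev DC (d : ℕ) : Type := ℤ × (Fin d → ℤ)

def side (Q : DC d) : ℝ := 2 ^ Q.1

def center (Q : DC d) : Euc d :=
  (EuclideanSpace.equiv (Fin d) ℝ).symm fun i => (2 : ℝ) ^ Q.1 * ((Q.2 i : ℝ) + 1 / 2)

def cubeSet (Q : DC d) : Set (Euc d) :=
  {y | ∀ i, (2 : ℝ) ^ Q.1 * (Q.2 i : ℝ) < y i ∧ y i < (2 : ℝ) ^ Q.1 * ((Q.2 i : ℝ) + 1)}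

/-- the concentric open cube `3Q`. -/
def threeQ (Q : DC d) : Set (Euc d) :=
  {y | ∀ i, |y i - center Q i| < 3 * side Q / 2}

/-- `D_μ(3Q) = μ(3Q)/ℓ(Q)^s`, as an extended nonnegative real. -/
def DensE (s : ℝ) (μ : Measure (Euc d)) (Q : DC d) : ℝ≥0∞ :=
  μ (threeQ Q) / ENNReal.ofReal (side Q ^ s)

/-- `D_μ(3Q) = μ(3Q)/ℓ(Q)^s`, as a real number. -/
def DensR (s : ℝ) (μ : Measure (Euc d)) (Q : DC d) : ℝ :=
  (μ (threeQ Q)).toReal / side Q ^ s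

def IsChildOf (Q P : DC d) : Prop :=
  P.1 = Q.1 + 1 ∧ ∀ i, Q.2 i = 2 * P.2 i ∨ Q.2 i = 2 * P.2 i + 1

def AdjRel (Q Q' : DC d) : Prop :=
  IsChildOf Q Q' ∨ IsChildOf Q' Q ∨
    (Q.1 = Q'.1 ∧ ∃ i, (∀ j, j ≠ i → Q.2 j = Q'.2 j) ∧
      (Q'.2 i = Q.2 i + 1 ∨ Q.2 i = Q'.2 i + 1))

/-- The graph `Γ(𝒟)` on the dyadic lattice. -/
def dyadicGraph (d : ℕ) : SimpleGraph (DC d) := SimpleGraph.fromRel AdjRel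

/-- graph distance in `Γ(𝒟)`. -/
def gdist (Q Q' : DC d) : ℕ := (dyadicGraph d).dist Q Q'

def EpsRegular (s ε : ℝ) (μ : Measure (Euc d)) (Q : DC d) : Prop :=
  ∀ Q' : DC d, DensE s μ Q' ≤ ENNReal.ofReal ((2 : ℝ) ^ (ε * (gdist Q Q' : ℝ))) * DensE s μ Q

/-- The family `Φ_A^μ(Q)`. -/
def Phi (A : ℝ) (μ : Measure (Euc d)) (Q : DC d) : Set (Euc d → ℝ) :=
  {ψ | LipschitzWith (Real.toNNReal (1 / side Q)) ψ ∧
    tsupport ψ ⊆ ball (center Q) (A * side Q) ∧ (∫ x, ψ x ∂μ) = 0}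

/-- The Lipschitz oscillation coefficient `Θ_μ^A(Q)`. -/
def Theta (K : Euc d → V) (μ : Measure (Euc d)) (A : ℝ) (Q : DC d) : ℝ :=
  sSup {t | ∃ f ∈ Phi A μ Q, ∃ ψ : Euc d → ℝ, LipCS ψ ∧ OneOnNbhd f ψ ∧ t = ‖pairOne K μ f ψ‖}

def IsReasonable (s β Λ : ℝ) (μ : Measure (Euc d)) : Prop :=
  ∀ (x : Euc d) (r R : ℝ), 0 < r → 1 < R → ball x r ⊆ ball (0 : Euc d) R →
    μ (ball x r) ≤ ENNReal.ofReal (Λ * r ^ s * (R * max 1 (1 / r)) ^ β)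

/-- The `s`-Riesz kernel `x/|x|^{s+1}`. -/
def riesz (s : ℝ) (x : Euc d) : Euc d := (‖x‖ ^ (-(s + 1))) • x

/-- `Q` is `δ`-non-LCV for `μ`. -/
def NonLCV (δ : ℝ) (μ : Measure (Euc d)) (Q : DC d) : Prop :=
  ∃ x ∈ closure (threeQ Q) ∩ msupp μ, ∃ y ∈ closure (threeQ Q) ∩ msupp μ,
    ball ((2⁻¹ : ℝ) • (x + y)) (δ * side Q) ∩ msupp μ = ∅

/-- the unit cube `(0,1)^d` in the dyadic lattice. -/
def Q0 (d : ℕ) : DC d := (0, fun _ => 0)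

end

namespace St7aux
open SimpleGraph

variable {d : ℕ}

abbrev Move (d : ℕ) := (Fin d → Bool) ⊕ ((Fin d × Bool) ⊕ Bool)

def step : Move d → DC d → DC d
  | Sum.inl b, Q => (Q.1 - 1, fun i => 2 * Q.2 i + (if b i then 1 else 0))
  | Sum.inr (Sum.inl (i, bp)), Q => (Q.1, Function.update Q.2 i (Q.2 i + if bp then 1 else -1))
  | Sum.inr (Sum.inr true), Q => (Q.1 + 1, fun i => Q.2 i / 2)
  | Sum.inr (Sum.inr false), Q => Q

lemma adjRel_symm {Q Q' : DC d} (h : AdjRel Q Q') : AdjRel Q' Q := by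
  rcases h with h | h | ⟨h1, i, hj, hc⟩
  · exact Or.inr (Or.inl h)
  · exact Or.inl h
  · exact Or.inr (Or.inr ⟨h1.symm, i, fun j hjne => (hj j hjne).symm, hc.symm⟩)

lemma adjRel_step {Q Q' : DC d} (h : AdjRel Q Q') : ∃ m : Move d, step m Q = Q' := by
  rcases h with ⟨h1, h2⟩ | ⟨h1, h2⟩ | ⟨h1, i, hj, hc⟩
  · -- Q' is the parent of Q
    refine ⟨Sum.inr (Sum.inr true), Prod.ext h1.symm (funext fun i => ?_)⟩
    rcases h2 i with h | h <;> simp [step] <;> omega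
  · -- Q' is a child of Q
    refine ⟨Sum.inl fun i => decide (Q'.2 i = 2 * Q.2 i + 1), Prod.ext (by simp [step]; omega) (funext fun i => ?_)⟩
    rcases h2 i with h | h <;> simp [step, h] <;> omega
  · rcases hc with hc | hc
    · refine ⟨Sum.inr (Sum.inl (i, true)), Prod.ext (by simp [step, h1]) (funext fun j => ?_)⟩
      by_cases hji : j = i
      · subst hji; simp [step, Function.update_self, hc]
      · simp [step, Function.update_of_ne hji, hj j hji]
    · refine ⟨Sum.inr (Sum.inl (i, false)), Prod.ext (by simp [step, h1]) (funext fun j => ?_)⟩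
      by_cases hji : j = i
      · subst hji; simp [step, Function.update_self]; omega
      · simp [step, Function.update_of_ne hji, hj j hji]

lemma adj_step {Q Q' : DC d} (h : (dyadicGraph d).Adj Q Q') : ∃ m : Move d, step m Q = Q' := by
  rw [dyadicGraph, SimpleGraph.fromRel_adj] at h
  rcases h.2 with h' | h'
  · exact adjRel_step h'
  · exact adjRel_step (adjRel_symm h')

lemma adjRel_fst {Q Q' : DC d} (h : AdjRel Q Q') : (Q.1 - Q'.1).natAbs ≤ 1 := by
  rcases h with ⟨h1, -⟩ | ⟨h1, -⟩ | ⟨h1, -⟩ <;> omega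

lemma adj_fst {Q Q' : DC d} (h : (dyadicGraph d).Adj Q Q') : (Q.1 - Q'.1).natAbs ≤ 1 := by
  rw [dyadicGraph, SimpleGraph.fromRel_adj] at h
  rcases h.2 with h' | h'
  · exact adjRel_fst h'
  · have := adjRel_fst h'; omega

lemma walk_word {Q Q' : DC d} (w : (dyadicGraph d).Walk Q Q') :
    ∃ l : List (Move d), l.length = w.length ∧ l.foldl (fun q m => step m q) Q = Q' := by
  induction w with
  | nil => exact ⟨[], rfl, rfl⟩
  | @cons u v w h p ih =>
    obtain ⟨m, hm⟩ := adj_step h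
    obtain ⟨l, hl, hf⟩ := ih
    refine ⟨m :: l, by simp [hl], ?_⟩
    simpa [List.foldl_cons, hm] using hf

lemma walk_fst {Q Q' : DC d} (w : (dyadicGraph d).Walk Q Q') :
    (Q.1 - Q'.1).natAbs ≤ w.length := by
  induction w with
  | nil => simp
  | @cons u v w h p ih =>
    have := adj_fst h
    simp only [SimpleGraph.Walk.length_cons]
    omega

lemma adj_lat (n : ℤ) (k : Fin d → ℤ) (i : Fin d) (m : ℤ) (h : m = k i + 1 ∨ k i = m + 1) :
    (dyadicGraph d).Adj (n, k) (n, Function.update k i m) := by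
  rw [dyadicGraph, SimpleGraph.fromRel_adj]
  constructor
  · intro hEq
    have h2 := congrFun (congrArg Prod.snd hEq) i
    simp only [Function.update_self] at h2
    omega
  · refine Or.inl (Or.inr (Or.inr ⟨rfl, i, fun j hjne => (Function.update_of_ne hjne _ _).symm, ?_⟩))
    simp only [Function.update_self]
    omega

lemma adj_parent (n : ℤ) (k : Fin d → ℤ) :
    (dyadicGraph d).Adj (n, k) (n + 1, fun i => k i / 2) := by
  rw [dyadicGraph, SimpleGraph.fromRel_adj]
  constructor
  · intro hEq
    have h1 : n = n + 1 := congrArg Prod.fst hEq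
    omega
  · refine Or.inl (Or.inl ⟨rfl, fun i => ?_⟩)
    show k i = 2 * (k i / 2) ∨ k i = 2 * (k i / 2) + 1
    omega

lemma reach_same (n : ℤ) (k k' : Fin d → ℤ) :
    (dyadicGraph d).Reachable (n, k) (n, k') := by
  suffices H : ∀ (N : ℕ) (k : Fin d → ℤ), (∑ i, (k' i - k i).natAbs) = N →
      (dyadicGraph d).Reachable (n, k) (n, k') from H _ k rfl
  intro N
  induction N using Nat.strong_induction_on with
  | _ N ih =>
    intro k hN
    rcases Nat.eq_zero_or_pos N with h0 | hpos
    · have hkk : k = k' := by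
        funext i
        have := Finset.sum_eq_zero_iff.mp (h0 ▸ hN) i (Finset.mem_univ i)
        omega
      rw [hkk]
    · have hex : ∃ i, k i ≠ k' i := by
        by_contra hcon
        push_neg at hcon
        have : (∑ i, (k' i - k i).natAbs) = 0 :=
          Finset.sum_eq_zero fun i _ => by rw [hcon i]; simp
        omega
      obtain ⟨i, hi⟩ := hex
      have hmain : ∀ m : ℤ, (m = k i + 1 ∨ k i = m + 1) → (k' i - m).natAbs = (k' i - k i).natAbs - 1 →
          (dyadicGraph d).Reachable (n, k) (n, k') := by
        intro m hm habs
        have hadj := adj_lat n k i m hm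
        have hsum : (∑ j, (k' j - Function.update k i m j).natAbs) = N - 1 := by
          rw [← Finset.sum_erase_add _ _ (Finset.mem_univ i)] at hN ⊢
          have heq : ∑ j ∈ Finset.univ.erase i, (k' j - Function.update k i m j).natAbs
              = ∑ j ∈ Finset.univ.erase i, (k' j - k j).natAbs :=
            Finset.sum_congr rfl fun j hjmem => by
              rw [Function.update_of_ne (Finset.ne_of_mem_erase hjmem)]
          rw [heq, Function.update_self, habs]
          have hipos : 1 ≤ (k' i - k i).natAbs := by omega
          omega
        have hlt : N - 1 < N := by omega
        exact hadj.reachable.trans (ih (N - 1) hlt _ hsum)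
      rcases lt_or_gt_of_ne hi with hlt | hgt
      · refine hmain (k i + 1) (Or.inl rfl) ?_
        omega
      · refine hmain (k i - 1) (Or.inr (by ring)) ?_
        omega

lemma reach_up (n : ℤ) (k : Fin d → ℤ) :
    ∀ j : ℕ, ∃ k'' : Fin d → ℤ, (dyadicGraph d).Reachable (n, k) (n + (j : ℤ), k'') := by
  intro j
  induction j with
  | zero => exact ⟨k, by rw [Nat.cast_zero, add_zero]⟩
  | succ j ih =>
    obtain ⟨k'', h⟩ := ih
    refine ⟨fun i => k'' i / 2, ?_⟩
    have hcast : (((j + 1 : ℕ)) : ℤ) = (j : ℤ) + 1 := by push_cast; ring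
    rw [hcast, ← add_assoc]
    exact h.trans (adj_parent (n + (j : ℤ)) k'').reachable

lemma reach_all (Q Q' : DC d) : (dyadicGraph d).Reachable Q Q' := by
  obtain ⟨n, k⟩ := Q
  obtain ⟨m, k'⟩ := Q'
  set M := max n m with hM
  obtain ⟨a, h1⟩ := reach_up n k (M - n).toNat
  obtain ⟨b, h2⟩ := reach_up m k' (M - m).toNat
  have e1 : n + ((M - n).toNat : ℤ) = M := by omega
  have e2 : m + ((M - m).toNat : ℤ) = M := by omega
  rw [e1] at h1
  rw [e2] at h2
  exact h1.trans ((reach_same M a b).trans h2.symm)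

lemma connected (d : ℕ) : (dyadicGraph d).Connected :=
  SimpleGraph.Connected.mk (fun Q Q' => reach_all Q Q')
    (nonempty := ⟨((0 : ℤ), fun _ => (0 : ℤ))⟩)

lemma gdist_triangle (Q R P : DC d) : gdist Q P ≤ gdist Q R + gdist R P :=
  (connected d).dist_triangle

lemma gdist_comm (Q R : DC d) : gdist Q R = gdist R Q := SimpleGraph.dist_comm

lemma gdist_eq_zero {Q R : DC d} (h : gdist Q R = 0) : Q = R :=
  ((connected d).dist_eq_zero_iff).mp h

lemma gdist_self (Q : DC d) : gdist Q Q = 0 := SimpleGraph.dist_self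

lemma exists_word (R Q : DC d) :
    ∃ l : List (Move d), l.length = gdist R Q ∧ l.foldl (fun q m => step m q) R = Q := by
  obtain ⟨w, hw⟩ := (reach_all R Q).exists_walk_length_eq_dist
  obtain ⟨l, hl, hf⟩ := walk_word w
  exact ⟨l, hl.trans hw, hf⟩

lemma gdist_fst (Q R : DC d) : (Q.1 - R.1).natAbs ≤ gdist Q R := by
  obtain ⟨w, hw⟩ := (reach_all Q R).exists_walk_length_eq_dist
  have := walk_fst w
  rw [gdist, ← hw]
  exact this

end St7aux
namespace St7aux

lemma tsum_gdist_le {d : ℕ} (c : ℝ≥0∞)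
    (hc : (Fintype.card (Move d) : ℝ≥0∞) * c ≤ 2⁻¹) (R : DC d) :
    (∑' Q : DC d, c ^ gdist R Q) ≤ 2 := by
  choose l hlen happ using fun Q => exists_word R Q
  set ψ : DC d → Σ n : ℕ, Fin n → Move d := fun Q => ⟨(l Q).length, (l Q).get⟩ with hψ
  have hinj : Function.Injective ψ := by
    intro Q Q' h
    have h1 : List.ofFn (l Q).get = List.ofFn (l Q').get := by
      have := congrArg (fun x : Σ n : ℕ, Fin n → Move d => List.ofFn x.2) h
      simpa [ψ] using this
    rw [List.ofFn_get, List.ofFn_get] at h1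
    rw [← happ Q, ← happ Q', h1]
  calc (∑' Q : DC d, c ^ gdist R Q)
      = ∑' Q : DC d, (fun x : Σ n : ℕ, Fin n → Move d => c ^ x.1) (ψ Q) := by
        refine tsum_congr fun Q => ?_
        simp only [hψ]
        rw [hlen Q]
    _ ≤ ∑' x : Σ n : ℕ, Fin n → Move d, c ^ x.1 :=
        ENNReal.tsum_comp_le_tsum_of_injective hinj _
    _ = ∑' n : ℕ, ∑' _w : Fin n → Move d, c ^ n := ENNReal.tsum_sigma' _
    _ = ∑' n : ℕ, ((Fintype.card (Move d) : ℝ≥0∞) * c) ^ n := by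
        refine tsum_congr fun n => ?_
        rw [tsum_fintype, Finset.sum_const, nsmul_eq_mul, mul_pow]
        congr 1
        rw [Finset.card_univ, Fintype.card_fun, Fintype.card_fin]
        push_cast
        ring
    _ ≤ ∑' n : ℕ, (2⁻¹ : ℝ≥0∞) ^ n := ENNReal.tsum_le_tsum fun n => pow_le_pow_left' hc n
    _ = 2 := by
        rw [ENNReal.tsum_geometric, ENNReal.one_sub_inv_two, inv_inv]

lemma card_move_le {d : ℕ} (hd : 1 ≤ d) : Fintype.card (Move d) ≤ 2 ^ (d + 2) := by
  have h1 : Fintype.card (Move d) = 2 ^ d + (d * 2 + 2) := by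
    simp [Move, Fintype.card_sum, Fintype.card_fun, Fintype.card_prod]
  have h2 : d < 2 ^ d := Nat.lt_two_pow_self
  have h3 : 2 ^ (d + 2) = 4 * 2 ^ d := by ring
  omega

lemma side_pos {d : ℕ} (Q : DC d) : 0 < side Q := zpow_pos (by norm_num) _

lemma ofReal_side_ne_zero {d : ℕ} {s : ℝ} (Q : DC d) :
    ENNReal.ofReal (side Q ^ s) ≠ 0 := by
  simp only [ne_eq, ENNReal.ofReal_eq_zero, not_le]
  exact Real.rpow_pos_of_pos (side_pos Q) s

lemma densE_ne_top {d : ℕ} {s : ℝ} {μ : Measure (Euc d)} [IsFiniteMeasure μ] (Q : DC d) :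
    DensE s μ Q ≠ ⊤ :=
  (ENNReal.div_lt_top (measure_ne_top μ _) (ofReal_side_ne_zero Q)).ne

lemma mu3_eq {d : ℕ} (s : ℝ) (μ : Measure (Euc d)) (Q : DC d) :
    μ (threeQ Q) = DensE s μ Q * ENNReal.ofReal (side Q ^ s) :=
  (ENNReal.div_mul_cancel (ofReal_side_ne_zero Q) ENNReal.ofReal_ne_top).symm

lemma threeQ_subset {d : ℕ} (hd : 1 ≤ d) (Q : DC d) :
    threeQ Q ⊆ Metric.ball (center Q) (2 * Real.sqrt d * side Q) := by
  intro y hy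
  have hside := side_pos Q
  have hsqrt : 1 ≤ Real.sqrt d := by
    rw [show (1 : ℝ) = Real.sqrt 1 by simp]
    exact Real.sqrt_le_sqrt (by exact_mod_cast hd)
  rw [Metric.mem_ball, dist_eq_norm, EuclideanSpace.norm_eq]
  have hbound : ∀ i, ‖(y - center Q) i‖ ^ 2 ≤ (3 * side Q / 2) ^ 2 := by
    intro i
    have h1 : |y i - center Q i| < 3 * side Q / 2 := hy i
    have h2 : ‖(y - center Q) i‖ = |y i - center Q i| := by
      simp [PiLp.sub_apply, Real.norm_eq_abs]
    rw [h2]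
    exact pow_le_pow_left₀ (abs_nonneg _) h1.le 2
  have hsum : (∑ i, ‖(y - center Q) i‖ ^ 2) ≤ d * (3 * side Q / 2) ^ 2 := by
    calc (∑ i, ‖(y - center Q) i‖ ^ 2) ≤ ∑ _i : Fin d, (3 * side Q / 2) ^ 2 :=
          Finset.sum_le_sum fun i _ => hbound i
      _ = d * (3 * side Q / 2) ^ 2 := by
          rw [Finset.sum_const, Finset.card_univ, Fintype.card_fin, nsmul_eq_mul]
  calc Real.sqrt (∑ i, ‖(y - center Q) i‖ ^ 2)
      ≤ Real.sqrt (d * (3 * side Q / 2) ^ 2) := Real.sqrt_le_sqrt hsum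
    _ = Real.sqrt d * (3 * side Q / 2) := by
        rw [Real.sqrt_mul (by positivity), Real.sqrt_sq (by positivity)]
    _ < 2 * Real.sqrt d * side Q := by nlinarith

lemma dens_le {d : ℕ} (hd : 1 ≤ d) {s Λ : ℝ} (hs0 : 0 < s) (hΛ : 0 ≤ Λ) {μ : Measure (Euc d)}
    (hμ : IsNice s Λ μ) (Q : DC d) :
    DensE s μ Q ≤ ENNReal.ofReal (Λ * (2 * Real.sqrt d) ^ s) := by
  have hside := side_pos Q
  have hsqrt : (0 : ℝ) < Real.sqrt d := Real.sqrt_pos.mpr (by exact_mod_cast Nat.lt_of_lt_of_le Nat.zero_lt_one hd)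
  have hr : (0 : ℝ) < 2 * Real.sqrt d * side Q := by positivity
  have h1 : μ (threeQ Q) ≤ ENNReal.ofReal (Λ * (2 * Real.sqrt d * side Q) ^ s) :=
    le_trans (measure_mono (threeQ_subset hd Q)) (hμ (center Q) _ hr)
  rw [DensE, ENNReal.div_le_iff (ofReal_side_ne_zero Q) ENNReal.ofReal_ne_top]
  refine h1.trans (le_of_eq ?_)
  rw [← ENNReal.ofReal_mul (mul_nonneg hΛ (Real.rpow_nonneg (by positivity) s))]
  congr 1
  rw [Real.mul_rpow (by positivity) hside.le]
  ring

end St7aux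
namespace St7aux

lemma sel {d : ℕ} {s ε : ℝ} (hε : 0 < ε) (μ : Measure (Euc d)) [IsFiniteMeasure μ]
    (M : ℝ≥0∞) (hM : ∀ Q : DC d, DensE s μ Q ≤ M) :
    ∀ N : ℕ, ∀ Q : DC d, M < ENNReal.ofReal ((2 : ℝ) ^ (ε * (N : ℝ))) * DensE s μ Q →
      ∃ R : DC d, EpsRegular s ε μ R ∧
        ENNReal.ofReal ((2 : ℝ) ^ (ε * (gdist R Q : ℝ))) * DensE s μ Q ≤ DensE s μ R := by
  intro N
  induction N with
  | zero =>
    intro Q hQ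
    rw [Nat.cast_zero, mul_zero, Real.rpow_zero, ENNReal.ofReal_one, one_mul] at hQ
    exact absurd (hQ.trans_le (hM Q)) (lt_irrefl M)
  | succ N ih =>
    intro Q hQ
    by_cases hreg : EpsRegular s ε μ Q
    · refine ⟨Q, hreg, ?_⟩
      rw [gdist_self, Nat.cast_zero, mul_zero, Real.rpow_zero, ENNReal.ofReal_one, one_mul]
    · rw [EpsRegular] at hreg
      push_neg at hreg
      obtain ⟨Q₁, hQ₁⟩ := hreg
      have hQ₁lt : ENNReal.ofReal ((2 : ℝ) ^ (ε * (gdist Q Q₁ : ℝ))) * DensE s μ Q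
          < DensE s μ Q₁ := hQ₁
      have hgpos : 1 ≤ gdist Q Q₁ := by
        rcases Nat.eq_zero_or_pos (gdist Q Q₁) with h0 | h
        · exfalso
          have hQeq := gdist_eq_zero h0
          subst hQeq
          rw [h0, Nat.cast_zero, mul_zero, Real.rpow_zero, ENNReal.ofReal_one, one_mul] at hQ₁lt
          exact lt_irrefl _ hQ₁lt
        · exact h
      -- 2^ε * DensE Q ≤ DensE Q₁
      have hstep : ENNReal.ofReal ((2 : ℝ) ^ ε) * DensE s μ Q ≤ DensE s μ Q₁ := by
        refine le_trans (mul_le_mul_left (ENNReal.ofReal_le_ofReal ?_) _) hQ₁lt.le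
        apply Real.rpow_le_rpow_of_exponent_le one_le_two
        have : (1 : ℝ) ≤ (gdist Q Q₁ : ℝ) := by exact_mod_cast hgpos
        nlinarith
      -- apply ih to Q₁
      have hup : M < ENNReal.ofReal ((2 : ℝ) ^ (ε * (N : ℝ))) * DensE s μ Q₁ := by
        refine hQ.trans_le ?_
        calc ENNReal.ofReal ((2 : ℝ) ^ (ε * ((N + 1 : ℕ) : ℝ))) * DensE s μ Q
            = ENNReal.ofReal ((2 : ℝ) ^ (ε * (N : ℝ))) *
              (ENNReal.ofReal ((2 : ℝ) ^ ε) * DensE s μ Q) := by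
              rw [← mul_assoc, ← ENNReal.ofReal_mul (by positivity), ← Real.rpow_add two_pos]
              congr 2
              push_cast
              ring
          _ ≤ ENNReal.ofReal ((2 : ℝ) ^ (ε * (N : ℝ))) * DensE s μ Q₁ :=
              mul_le_mul_right hstep _
      obtain ⟨R, hR, hRle⟩ := ih Q₁ hup
      refine ⟨R, hR, ?_⟩
      calc ENNReal.ofReal ((2 : ℝ) ^ (ε * (gdist R Q : ℝ))) * DensE s μ Q
          ≤ ENNReal.ofReal ((2 : ℝ) ^ (ε * ((gdist R Q₁ : ℝ) + (gdist Q Q₁ : ℝ)))) *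
            DensE s μ Q := by
            refine mul_le_mul_left (ENNReal.ofReal_le_ofReal ?_) _
            apply Real.rpow_le_rpow_of_exponent_le one_le_two
            have htr : gdist R Q ≤ gdist R Q₁ + gdist Q₁ Q := gdist_triangle R Q₁ Q
            have hcomm : gdist Q₁ Q = gdist Q Q₁ := gdist_comm Q₁ Q
            have : (gdist R Q : ℝ) ≤ (gdist R Q₁ : ℝ) + (gdist Q Q₁ : ℝ) := by
              exact_mod_cast hcomm ▸ htr
            nlinarith
        _ = ENNReal.ofReal ((2 : ℝ) ^ (ε * (gdist R Q₁ : ℝ))) *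
            (ENNReal.ofReal ((2 : ℝ) ^ (ε * (gdist Q Q₁ : ℝ))) * DensE s μ Q) := by
            rw [← mul_assoc, ← ENNReal.ofReal_mul (by positivity), ← Real.rpow_add two_pos]
            congr 2
            ring
        _ ≤ ENNReal.ofReal ((2 : ℝ) ^ (ε * (gdist R Q₁ : ℝ))) * DensE s μ Q₁ :=
            mul_le_mul_right hQ₁lt.le _
        _ ≤ DensE s μ R := hRle

end St7aux
theorem statement7 (d : ℕ) (hd : 1 ≤ d) (s : ℝ) (hs0 : 0 < s) (hsd : s < d) :
    ∀ ε : ℝ, 0 < ε → ∃ p C : ℝ, 2 ≤ p ∧ 0 < C ∧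
      ∀ Λ : ℝ, 0 < Λ → ∀ μ : Measure (Euc d), IsFiniteMeasure μ → IsNice s Λ μ →
        (∑' Q : DC d, DensE s μ Q ^ p * μ (threeQ Q))
          ≤ ENNReal.ofReal C *
            ∑' Q : {Q : DC d // EpsRegular s ε μ Q},
              DensE s μ Q.1 ^ p * μ (threeQ Q.1) := by
  intro ε hε
  set p := max 2 ((s + d + 3) / ε) with hp_def
  refine ⟨p, 2, le_max_left _ _, two_pos, ?_⟩
  intro Λ hΛ μ hfin hnice
  haveI := hfin
  have hp0 : (0 : ℝ) < p := lt_of_lt_of_le two_pos (le_max_left _ _)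
  have hpε : s + (d : ℝ) + 3 ≤ ε * p := by
    have h := le_max_right 2 ((s + d + 3) / ε)
    rw [div_le_iff₀ hε] at h
    have : s + (d : ℝ) + 3 ≤ p * ε := h
    linarith
  set a := ε * (p + 1) - s with ha_def
  have ha : (d : ℝ) + 3 ≤ a := by
    have : ε * (p + 1) = ε * p + ε := by ring
    rw [ha_def, this]
    linarith
  have hdnn : (0 : ℝ) ≤ d := Nat.cast_nonneg d
  have ha0 : 0 < a := by linarith
  set c := ENNReal.ofReal ((2 : ℝ) ^ (-a)) with hc_def
  -- the geometric bound constant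
  have hc : (Fintype.card (St7aux.Move d) : ℝ≥0∞) * c ≤ 2⁻¹ := by
    have hcard := St7aux.card_move_le (d := d) hd
    have h1 : ((Fintype.card (St7aux.Move d) : ℝ)) ≤ (2 : ℝ) ^ ((d : ℝ) + 2) := by
      calc ((Fintype.card (St7aux.Move d) : ℝ)) ≤ ((2 ^ (d + 2) : ℕ) : ℝ) := by
            exact_mod_cast hcard
        _ = (2 : ℝ) ^ ((d : ℝ) + 2) := by
            rw [show ((d : ℝ) + 2) = ((d + 2 : ℕ) : ℝ) by push_cast; ring,
              Real.rpow_natCast]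
            push_cast
            ring
    have h2 : (2 : ℝ) ^ (-a) ≤ (2 : ℝ) ^ (-((d : ℝ) + 3)) :=
      Real.rpow_le_rpow_of_exponent_le one_le_two (by linarith)
    have hreal : ((Fintype.card (St7aux.Move d) : ℝ)) * (2 : ℝ) ^ (-a) ≤ 2⁻¹ := by
      calc ((Fintype.card (St7aux.Move d) : ℝ)) * (2 : ℝ) ^ (-a)
          ≤ (2 : ℝ) ^ ((d : ℝ) + 2) * (2 : ℝ) ^ (-((d : ℝ) + 3)) :=
            mul_le_mul h1 h2 (by positivity) (by positivity)
        _ = (2 : ℝ) ^ ((-1 : ℝ)) := by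
            rw [← Real.rpow_add two_pos]
            congr 1
            ring
        _ = 2⁻¹ := by
            rw [show ((-1 : ℝ)) = ((-1 : ℤ) : ℝ) by norm_num, Real.rpow_intCast]
            norm_num
    calc (Fintype.card (St7aux.Move d) : ℝ≥0∞) * c
        = ENNReal.ofReal (((Fintype.card (St7aux.Move d) : ℝ)) * (2 : ℝ) ^ (-a)) := by
          rw [hc_def, ENNReal.ofReal_mul (by positivity), ENNReal.ofReal_natCast]
      _ ≤ ENNReal.ofReal 2⁻¹ := ENNReal.ofReal_le_ofReal hreal
      _ = 2⁻¹ := by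
          rw [ENNReal.ofReal_inv_of_pos two_pos, ENNReal.ofReal_ofNat]
  set M := ENNReal.ofReal (Λ * (2 * Real.sqrt d) ^ s) with hM_def
  have hM : ∀ Q : DC d, DensE s μ Q ≤ M := fun Q =>
    St7aux.dens_le hd hs0 hΛ.le hnice Q
  by_cases hall : ∀ Q : DC d, DensE s μ Q = 0
  · have hz : ∀ Q : DC d, DensE s μ Q ^ p * μ (threeQ Q) = 0 := fun Q => by
      rw [hall Q, ENNReal.zero_rpow_of_pos hp0, zero_mul]
    calc (∑' Q : DC d, DensE s μ Q ^ p * μ (threeQ Q)) = 0 := by simp [hz]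
      _ ≤ _ := zero_le
  · push_neg at hall
    obtain ⟨Qex, hQex⟩ := hall
    have hexN : ∀ Q : DC d, DensE s μ Q ≠ 0 →
        ∃ N : ℕ, M < ENNReal.ofReal ((2 : ℝ) ^ (ε * (N : ℝ))) * DensE s μ Q := by
      intro Q hQ0
      have hfin' : DensE s μ Q ≠ ⊤ := St7aux.densE_ne_top Q
      set t := (DensE s μ Q).toReal with ht_def
      have ht : 0 < t := ENNReal.toReal_pos hQ0 hfin'
      have h2e : (1 : ℝ) < (2 : ℝ) ^ ε := by
        rw [show (1 : ℝ) = (2 : ℝ) ^ (0 : ℝ) by rw [Real.rpow_zero]]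
        exact Real.rpow_lt_rpow_of_exponent_lt one_lt_two hε
      obtain ⟨N, hN⟩ := pow_unbounded_of_one_lt ((Λ * (2 * Real.sqrt d) ^ s + 1) / t) h2e
      refine ⟨N, ?_⟩
      have hpow : ((2 : ℝ) ^ ε) ^ N = (2 : ℝ) ^ (ε * (N : ℝ)) := by
        rw [← Real.rpow_natCast ((2 : ℝ) ^ ε) N, ← Real.rpow_mul (by norm_num)]
      have hlt : Λ * (2 * Real.sqrt d) ^ s < (2 : ℝ) ^ (ε * (N : ℝ)) * t := by
        rw [← hpow]
        rw [div_lt_iff₀ ht] at hN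
        nlinarith
      calc M = ENNReal.ofReal (Λ * (2 * Real.sqrt d) ^ s) := hM_def
        _ < ENNReal.ofReal ((2 : ℝ) ^ (ε * (N : ℝ)) * t) :=
            (ENNReal.ofReal_lt_ofReal_iff (by positivity)).mpr hlt
        _ = ENNReal.ofReal ((2 : ℝ) ^ (ε * (N : ℝ))) * DensE s μ Q := by
            rw [ENNReal.ofReal_mul (by positivity), ht_def, ENNReal.ofReal_toReal hfin']
    obtain ⟨N₀, hN₀⟩ := hexN Qex hQex
    obtain ⟨R₀, hR₀, -⟩ := St7aux.sel hε μ M hM N₀ Qex hN₀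
    have hselect : ∀ Q : DC d, ∃ R : DC d, EpsRegular s ε μ R ∧
        (DensE s μ Q = 0 ∨
          ENNReal.ofReal ((2 : ℝ) ^ (ε * (gdist R Q : ℝ))) * DensE s μ Q ≤ DensE s μ R) := by
      intro Q
      by_cases hQ0 : DensE s μ Q = 0
      · exact ⟨R₀, hR₀, Or.inl hQ0⟩
      · obtain ⟨N, hN⟩ := hexN Q hQ0
        obtain ⟨R, hR, hle⟩ := St7aux.sel hε μ M hM N Q hN
        exact ⟨R, hR, Or.inr hle⟩
    choose r hreg hrle using hselect
    -- the per-cube estimate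
    have hterm : ∀ Q : DC d, DensE s μ Q ^ p * μ (threeQ Q)
        ≤ c ^ gdist (r Q) Q * (DensE s μ (r Q) ^ p * μ (threeQ (r Q))) := by
      intro Q
      rcases hrle Q with h0 | hle
      · rw [h0, ENNReal.zero_rpow_of_pos hp0, zero_mul]
        exact zero_le
      · set R := r Q with hR_def
        set n := gdist R Q with hn_def
        have hDQle : DensE s μ Q ≤
            ENNReal.ofReal ((2 : ℝ) ^ (-(ε * (n : ℝ)))) * DensE s μ R := by
          calc DensE s μ Q
              = ENNReal.ofReal ((2 : ℝ) ^ (-(ε * (n : ℝ)))) *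
                (ENNReal.ofReal ((2 : ℝ) ^ (ε * (n : ℝ))) * DensE s μ Q) := by
                rw [← mul_assoc, ← ENNReal.ofReal_mul (by positivity),
                  ← Real.rpow_add two_pos, neg_add_cancel, Real.rpow_zero,
                  ENNReal.ofReal_one, one_mul]
            _ ≤ _ := mul_le_mul_right hle _
        have hsideQ : side Q ^ s ≤ (2 : ℝ) ^ ((n : ℝ) * s) * side R ^ s := by
          have hfst := St7aux.gdist_fst R Q
          have hfst' : Q.1 ≤ R.1 + (n : ℤ) := by
            rw [← hn_def] at hfst
            omega
          have h1 : side Q ≤ 2 ^ (n : ℕ) * side R := by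
            rw [side, side, ← zpow_natCast (2 : ℝ) n, ← zpow_add₀ (two_ne_zero)]
            exact zpow_le_zpow_right₀ one_le_two (by omega)
          calc side Q ^ s ≤ ((2 : ℝ) ^ (n : ℕ) * side R) ^ s :=
                Real.rpow_le_rpow (St7aux.side_pos Q).le h1 hs0.le
            _ = (2 : ℝ) ^ ((n : ℝ) * s) * side R ^ s := by
                rw [Real.mul_rpow (by positivity) (St7aux.side_pos R).le,
                  ← Real.rpow_natCast (2 : ℝ) n, ← Real.rpow_mul (by norm_num)]
        have hμQ := St7aux.mu3_eq s μ Q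
        have hμR := St7aux.mu3_eq s μ R
        have hpre : ENNReal.ofReal ((2 : ℝ) ^ (-(ε * (n : ℝ)))) ^ p *
            ENNReal.ofReal ((2 : ℝ) ^ (-(ε * (n : ℝ)))) *
            ENNReal.ofReal ((2 : ℝ) ^ ((n : ℝ) * s)) = c ^ n := by
          rw [ENNReal.ofReal_rpow_of_pos (by positivity),
            ← Real.rpow_mul (by norm_num : (0:ℝ) ≤ 2),
            ← ENNReal.ofReal_mul (by positivity), ← ENNReal.ofReal_mul (by positivity),
            ← Real.rpow_add two_pos, ← Real.rpow_add two_pos,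
            hc_def, ← ENNReal.ofReal_pow (by positivity),
            ← Real.rpow_natCast ((2 : ℝ) ^ (-a)) n,
            ← Real.rpow_mul (by norm_num : (0:ℝ) ≤ 2)]
          congr 1
          rw [ha_def]
          ring
        calc DensE s μ Q ^ p * μ (threeQ Q)
            = DensE s μ Q ^ p * (DensE s μ Q * ENNReal.ofReal (side Q ^ s)) := by
              rw [← hμQ]
          _ ≤ (ENNReal.ofReal ((2 : ℝ) ^ (-(ε * (n : ℝ)))) * DensE s μ R) ^ p *
              ((ENNReal.ofReal ((2 : ℝ) ^ (-(ε * (n : ℝ)))) * DensE s μ R) *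
                (ENNReal.ofReal ((2 : ℝ) ^ ((n : ℝ) * s)) *
                  ENNReal.ofReal (side R ^ s))) := by
              have hb : ENNReal.ofReal (side Q ^ s) ≤
                  ENNReal.ofReal ((2 : ℝ) ^ ((n : ℝ) * s)) * ENNReal.ofReal (side R ^ s) := by
                rw [← ENNReal.ofReal_mul (by positivity)]
                exact ENNReal.ofReal_le_ofReal hsideQ
              exact mul_le_mul' (ENNReal.rpow_le_rpow hDQle hp0.le)
                (mul_le_mul' hDQle hb)
          _ = (ENNReal.ofReal ((2 : ℝ) ^ (-(ε * (n : ℝ)))) ^ p *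
                ENNReal.ofReal ((2 : ℝ) ^ (-(ε * (n : ℝ)))) *
                ENNReal.ofReal ((2 : ℝ) ^ ((n : ℝ) * s))) *
              (DensE s μ R ^ p * (DensE s μ R * ENNReal.ofReal (side R ^ s))) := by
              rw [ENNReal.mul_rpow_of_nonneg _ _ hp0.le]
              ring
          _ = c ^ n * (DensE s μ R ^ p * μ (threeQ R)) := by
              rw [hpre, ← hμR]
    -- sum up
    calc (∑' Q : DC d, DensE s μ Q ^ p * μ (threeQ Q))
        ≤ ∑' Q : DC d, c ^ gdist (r Q) Q * (DensE s μ (r Q) ^ p * μ (threeQ (r Q))) :=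
          ENNReal.tsum_le_tsum hterm
      _ = ∑' Q : DC d, ∑' R : {R : DC d // EpsRegular s ε μ R},
            (if R = (⟨r Q, hreg Q⟩ : {R : DC d // EpsRegular s ε μ R}) then
              c ^ gdist (r Q) Q * (DensE s μ (r Q) ^ p * μ (threeQ (r Q))) else 0) := by
          exact tsum_congr fun Q => (tsum_ite_eq _ (fun _ => c ^ gdist (r Q) Q * (DensE s μ (r Q) ^ p * μ (threeQ (r Q))))).symm
      _ = ∑' R : {R : DC d // EpsRegular s ε μ R}, ∑' Q : DC d,
            (if R = (⟨r Q, hreg Q⟩ : {R : DC d // EpsRegular s ε μ R}) then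
              c ^ gdist (r Q) Q * (DensE s μ (r Q) ^ p * μ (threeQ (r Q))) else 0) :=
          ENNReal.tsum_comm
      _ ≤ ∑' R : {R : DC d // EpsRegular s ε μ R}, ∑' Q : DC d,
            c ^ gdist R.1 Q * (DensE s μ R.1 ^ p * μ (threeQ R.1)) := by
          refine ENNReal.tsum_le_tsum fun R => ENNReal.tsum_le_tsum fun Q => ?_
          split_ifs with h
          · rw [h]
          · exact zero_le
      _ = ∑' R : {R : DC d // EpsRegular s ε μ R},
            (∑' Q : DC d, c ^ gdist R.1 Q) * (DensE s μ R.1 ^ p * μ (threeQ R.1)) :=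
          tsum_congr fun R => ENNReal.tsum_mul_right
      _ ≤ ∑' R : {R : DC d // EpsRegular s ε μ R},
            2 * (DensE s μ R.1 ^ p * μ (threeQ R.1)) :=
          ENNReal.tsum_le_tsum fun R =>
            mul_le_mul_left (St7aux.tsum_gdist_le c hc R.1) _
      _ = 2 * ∑' R : {R : DC d // EpsRegular s ε μ R},
            DensE s μ R.1 ^ p * μ (threeQ R.1) := ENNReal.tsum_mul_left
      _ = ENNReal.ofReal 2 * ∑' R : {R : DC d // EpsRegular s ε μ R},
            DensE s μ R.1 ^ p * μ (threeQ R.1) := by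
          rw [ENNReal.ofReal_ofNat]
end

section
/- Let s ∈ (0,d), α ∈ (0,1], and fix β ∈ (0, min(α,s)). There exists Λ > 0, depending only on s, d, and β, such that for every ε ∈ (0, β/2], any measure μ on ℝ^d satisfying D_μ(3Q) ≤ 2^{ε d(Q, Q₀)} for every Q ∈ 𝒟, where Q₀ = (0,1)^d, is Λ-reasonable. -/
open MeasureTheory Metric Set
open scoped ENNReal NNReal Classical

section Aux

open SimpleGraph

variable {d : ℕ}

lemma abs_coord_le_norm (a : Euc d) (i : Fin d) : |a i| ≤ ‖a‖ := by
  rw [EuclideanSpace.norm_eq]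
  have h1 : |a i| ^ 2 ≤ ∑ j, ‖a j‖ ^ 2 := by
    have h2 : |a i| ^ 2 = ‖a i‖ ^ 2 := by rw [Real.norm_eq_abs]
    rw [h2]
    exact Finset.single_le_sum (f := fun j => ‖a j‖ ^ 2) (fun j _ => sq_nonneg _)
      (Finset.mem_univ i)
  calc |a i| = Real.sqrt (|a i| ^ 2) := by rw [Real.sqrt_sq (abs_nonneg _)]
    _ ≤ _ := Real.sqrt_le_sqrt h1

/-- the dyadic parent -/
def dpar (Q : DC d) : DC d := (Q.1 + 1, fun i => Q.2 i / 2)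

lemma adj_dpar (Q : DC d) : (dyadicGraph d).Adj Q (dpar Q) := by
  rw [dyadicGraph, SimpleGraph.fromRel_adj]
  constructor
  · intro h
    have h1 := congrArg Prod.fst h
    simp only [dpar] at h1
    omega
  · refine Or.inl (Or.inl ⟨rfl, fun i => ?_⟩)
    show Q.2 i = 2 * (Q.2 i / 2) ∨ Q.2 i = 2 * (Q.2 i / 2) + 1
    omega

def dparIter : ℕ → DC d → DC d
  | 0, Q => Q
  | t + 1, Q => dpar (dparIter t Q)

lemma dparIter_fst (t : ℕ) (Q : DC d) : (dparIter t Q).1 = Q.1 + t := by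
  induction t with
  | zero => simp [dparIter]
  | succ t ih => simp only [dparIter, dpar, ih]; push_cast; ring

lemma walk_dparIter (Q : DC d) (t : ℕ) :
    ∃ p : (dyadicGraph d).Walk Q (dparIter t Q), p.length = t := by
  induction t with
  | zero => exact ⟨.nil, rfl⟩
  | succ t ih =>
    obtain ⟨p, hp⟩ := ih
    exact ⟨p.concat (adj_dpar _), (SimpleGraph.Walk.length_concat p _).trans (congrArg (· + 1) hp)⟩

lemma dparIter_snd_div (t : ℕ) (Q : DC d) (i : Fin d) :
    2 * ((dparIter (t+1) Q).2 i) ≤ (dparIter t Q).2 i ∧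
      (dparIter t Q).2 i ≤ 2 * ((dparIter (t+1) Q).2 i) + 1 := by
  show 2 * ((dparIter t Q).2 i / 2) ≤ _ ∧ _ ≤ 2 * ((dparIter t Q).2 i / 2) + 1
  omega

lemma dparIter_snd_bound (Q : DC d) (K : ℝ) (hK0 : 0 ≤ K)
    (hK : ∀ i, -K ≤ (Q.2 i : ℝ) ∧ (Q.2 i : ℝ) ≤ K) (t : ℕ) (i : Fin d) :
    -(K / 2 ^ t) - 1 ≤ ((dparIter t Q).2 i : ℝ) ∧ ((dparIter t Q).2 i : ℝ) ≤ K / 2 ^ t := by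
  induction t with
  | zero =>
    simp only [dparIter, pow_zero, div_one]
    exact ⟨by linarith [(hK i).1], (hK i).2⟩
  | succ t ih =>
    have h2 : (0:ℝ) < 2 ^ t := by positivity
    obtain ⟨hdiv1, hdiv2⟩ := dparIter_snd_div t Q i
    have hdiv1' : 2 * (((dparIter (t+1) Q).2 i : ℝ)) ≤ ((dparIter t Q).2 i : ℝ) := by
      exact_mod_cast hdiv1
    have hdiv2' : ((dparIter t Q).2 i : ℝ) ≤ 2 * (((dparIter (t+1) Q).2 i : ℝ)) + 1 := by
      exact_mod_cast hdiv2
    have hpow : (2:ℝ) ^ (t+1) = 2 * 2 ^ t := by ring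
    constructor
    · rw [hpow]
      rw [div_mul_eq_div_div_swap]
      nlinarith [ih.1]
    · rw [hpow]
      rw [div_mul_eq_div_div_swap]
      nlinarith [ih.2]

lemma adj_lateral {m : ℤ} {a b : Fin d → ℤ} (i : Fin d) (hj : ∀ j, j ≠ i → a j = b j)
    (hi : b i = a i + 1 ∨ a i = b i + 1) :
    (dyadicGraph d).Adj (m, a) (m, b) := by
  rw [dyadicGraph, SimpleGraph.fromRel_adj]
  refine ⟨?_, Or.inl (Or.inr (Or.inr ⟨rfl, i, hj, hi⟩))⟩
  intro h
  have h1 := congrArg (fun Q : DC d => Q.2 i) h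
  simp only at h1
  omega

lemma walk_lateral (m : ℤ) : ∀ (N : ℕ) (a b : Fin d → ℤ),
    (∑ i, (a i - b i).natAbs) = N →
    ∃ p : (dyadicGraph d).Walk (m, a) (m, b), p.length ≤ N := by
  intro N
  induction N with
  | zero =>
    intro a b h
    have hab : a = b := by
      funext i
      have h0 := Finset.sum_eq_zero_iff.mp h i (Finset.mem_univ i)
      omega
    subst hab
    exact ⟨.nil, le_rfl⟩
  | succ N ih =>
    intro a b h
    by_cases hab : a = b
    · subst hab; exact ⟨.nil, Nat.zero_le _⟩
    have hex : ∃ i, a i ≠ b i := by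
      by_contra hc; push_neg at hc; exact hab (funext hc)
    obtain ⟨i, hi⟩ := hex
    set a' := Function.update a i (if a i < b i then a i + 1 else a i - 1) with ha'
    have ha'i : a' i = (if a i < b i then a i + 1 else a i - 1) := Function.update_self i _ a
    have ha'j : ∀ j, j ≠ i → a' j = a j := fun j hji => Function.update_of_ne hji _ a
    have hadj : (dyadicGraph d).Adj (m, a) (m, a') := by
      refine adj_lateral i (fun j hji => (ha'j j hji).symm) ?_
      rw [ha'i]
      split <;> omega
    have hsum : (∑ j, (a' j - b j).natAbs) = N := by
      have h1 : ∑ j, (a' j - b j).natAbs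
          = (a' i - b i).natAbs + ∑ j ∈ Finset.univ \ {i}, (a j - b j).natAbs := by
        rw [Finset.sum_eq_add_sum_sdiff_singleton_of_mem (Finset.mem_univ i)
          (fun j => (a' j - b j).natAbs)]
        congr 1
        refine Finset.sum_congr rfl fun j hj => ?_
        simp only [Finset.mem_sdiff, Finset.mem_singleton] at hj
        rw [ha'j j hj.2]
      have h2 : ∑ j, (a j - b j).natAbs
          = (a i - b i).natAbs + ∑ j ∈ Finset.univ \ {i}, (a j - b j).natAbs :=
        Finset.sum_eq_add_sum_sdiff_singleton_of_mem (Finset.mem_univ i) _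
      have h3 : (a' i - b i).natAbs + 1 = (a i - b i).natAbs := by
        rw [ha'i]; split <;> omega
      omega
    obtain ⟨p, hp⟩ := ih a' b hsum
    exact ⟨.cons hadj p, by simp only [SimpleGraph.Walk.length_cons]; omega⟩

lemma dparIter_Q0 (t : ℕ) : dparIter t (Q0 d) = ((t : ℤ), fun _ => 0) := by
  induction t with
  | zero => simp [dparIter, Q0]
  | succ t ih =>
    simp only [dparIter, ih, dpar]
    refine Prod.ext (by push_cast; ring) ?_
    funext i
    norm_num

/-- key graph-distance bound -/
lemma gdist_le (Q : DC d) (t : ℕ) (hm : 0 ≤ Q.1 + t)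
    (hsmall : ∀ i, (dparIter t Q).2 i = 0 ∨ (dparIter t Q).2 i = -1) :
    (gdist Q (Q0 d) : ℝ) ≤ t + d + ((Q.1 : ℝ) + t) := by
  set m' : ℕ := (Q.1 + t).toNat with hm'
  have hm'' : ((m' : ℤ)) = Q.1 + t := Int.toNat_of_nonneg hm
  obtain ⟨p1, hp1⟩ := walk_dparIter Q t
  obtain ⟨p2, hp2⟩ := walk_lateral (d := d) (dparIter t Q).1
    (∑ i, ((dparIter t Q).2 i - (fun _ => (0:ℤ)) i).natAbs)
    (dparIter t Q).2 (fun _ => 0) rfl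
  obtain ⟨p3, hp3⟩ := walk_dparIter (Q0 d) m'
  have hQ0m : dparIter m' (Q0 d) = ((dparIter t Q).1, fun _ => (0:ℤ)) := by
    rw [dparIter_Q0, dparIter_fst, hm'']
  have hsum_le : (∑ i, ((dparIter t Q).2 i - (fun _ => (0:ℤ)) i).natAbs) ≤ d := by
    calc (∑ i, ((dparIter t Q).2 i - (fun _ => (0:ℤ)) i).natAbs) ≤ ∑ _i : Fin d, 1 := by
          refine Finset.sum_le_sum fun i _ => ?_
          rcases hsmall i with h | h <;> simp [h]
      _ = d := by simp
  have hfin : gdist Q (Q0 d) ≤ t + d + m' := by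
    have hdist := SimpleGraph.dist_le
      ((p1.append p2).append ((p3.reverse).copy hQ0m rfl))
    rw [SimpleGraph.Walk.length_append, SimpleGraph.Walk.length_append,
      SimpleGraph.Walk.length_copy, SimpleGraph.Walk.length_reverse] at hdist
    have hg : gdist Q (Q0 d) = (dyadicGraph d).dist Q (Q0 d) := rfl
    omega
  calc (gdist Q (Q0 d) : ℝ) ≤ ((t + d + m' : ℕ) : ℝ) := by exact_mod_cast hfin
    _ = t + d + ((m' : ℤ) : ℝ) := by push_cast; ring
    _ = t + d + ((Q.1 : ℝ) + t) := by rw [hm'']; push_cast; ring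

set_option maxHeartbeats 1000000 in
/-- the main real-number estimate -/
lemma real_estimate (d : ℕ) (s β ε r R : ℝ) (n c : ℤ) (D : ℕ)
    (hs : 0 < s) (hβ : 0 < β) (hβ1 : β < 1) (hε : 0 < ε) (hεβ : ε ≤ β / 2)
    (hr : 0 < r) (hR : 1 < R)
    (h1 : r ≤ (2:ℝ) ^ n) (h2 : (2:ℝ) ^ n < 2 * r)
    (h3 : R ≤ (2:ℝ) ^ c) (h4 : (2:ℝ) ^ c < 2 * R) (hr4 : r < 4 * R)
    (hD : (D : ℝ) ≤ ((max (n+1) (c+1) + 1 - n : ℤ) : ℝ) + d + ((max (n+1) (c+1) + 1 : ℤ) : ℝ)) :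
    (2:ℝ) ^ (ε * D) * ((2:ℝ) ^ n) ^ s
      ≤ 2 ^ ((d:ℝ) + s + 10) * r ^ s * (R * max 1 (1/r)) ^ β := by
  set X : ℝ := max 1 (1/r) with hX
  have hX1 : (1:ℝ) ≤ X := le_max_left _ _
  have hX0 : (0:ℝ) ≤ X := by linarith
  have hε1 : ε ≤ 1 := by linarith
  have hεβ' : ε ≤ β := by linarith
  have hR0 : (0:ℝ) < R := by linarith
  have h1X : (1:ℝ) ≤ X ^ β := by
    calc (1:ℝ) = X ^ (0:ℝ) := (Real.rpow_zero X).symm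
      _ ≤ X ^ β := Real.rpow_le_rpow_of_exponent_le hX1 hβ.le
  have h8 : (8:ℝ) = 2 ^ (3:ℝ) := by
    rw [show (3:ℝ) = ((3:ℕ):ℝ) by norm_num, Real.rpow_natCast]; norm_num
  have h16 : (2:ℝ) ^ (4:ℝ) = 16 := by
    rw [show (4:ℝ) = ((4:ℕ):ℝ) by norm_num, Real.rpow_natCast]; norm_num
  have h32 : (2:ℝ) ^ (5:ℝ) = 32 := by
    rw [show (5:ℝ) = ((5:ℕ):ℝ) by norm_num, Real.rpow_natCast]; norm_num
  have h128 : (2:ℝ) ^ (7:ℝ) = 128 := by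
    rw [show (7:ℝ) = ((7:ℕ):ℝ) by norm_num, Real.rpow_natCast]; norm_num
  rw [← Real.rpow_intCast 2 n] at h1 h2 ⊢
  rw [← Real.rpow_intCast 2 c] at h3 h4
  -- step 1 : 2^(ε D) ≤ 2^(7+d) * R^β * X^β
  have key : (2:ℝ) ^ (ε * D) ≤ 2 ^ ((7:ℝ) + d) * R ^ β * X ^ β := by
    have hed : ε * (4 + (d:ℝ)) ≤ (4:ℝ) + d := by
      nlinarith [Nat.cast_nonneg (α := ℝ) d]
    rcases le_or_gt c n with hcn | hnc
    · -- D ≤ n + 4 + d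
      have hD' : (D : ℝ) ≤ (n : ℝ) + 4 + d := by
        have hmax : max (n+1) (c+1) = n + 1 := by omega
        rw [hmax] at hD
        push_cast at hD
        linarith
      have hn0 : (0:ℝ) ≤ (2:ℝ) ^ ((n:ℝ)) := by positivity
      calc (2:ℝ) ^ (ε * D) ≤ 2 ^ (ε * ((n:ℝ) + 4 + d)) :=
            Real.rpow_le_rpow_of_exponent_le one_le_two
              (mul_le_mul_of_nonneg_left hD' hε.le)
        _ = 2 ^ ((n:ℝ) * ε) * 2 ^ (ε * (4 + (d:ℝ))) := by
            rw [← Real.rpow_add two_pos]; ring_nf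
        _ = ((2:ℝ) ^ ((n:ℝ))) ^ ε * 2 ^ (ε * (4 + (d:ℝ))) := by
            rw [← Real.rpow_mul (by norm_num)]
        _ ≤ (8 * R) ^ ε * 2 ^ ((4:ℝ) + d) := by
            have hb : (2:ℝ) ^ ((n:ℝ)) ≤ 8 * R := by nlinarith
            exact mul_le_mul (Real.rpow_le_rpow hn0 hb hε.le)
              (Real.rpow_le_rpow_of_exponent_le one_le_two hed) (by positivity) (by positivity)
        _ ≤ 8 * R ^ β * 2 ^ ((4:ℝ) + d) := by
            have h8e : (8 * R) ^ ε = 8 ^ ε * R ^ ε := Real.mul_rpow (by norm_num) hR0.le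
            have h8' : (8:ℝ) ^ ε ≤ 8 := by
              calc (8:ℝ) ^ ε ≤ 8 ^ (1:ℝ) :=
                    Real.rpow_le_rpow_of_exponent_le (by norm_num) hε1
                _ = 8 := Real.rpow_one 8
            have hRe : R ^ ε ≤ R ^ β := Real.rpow_le_rpow_of_exponent_le hR.le hεβ'
            rw [h8e]
            exact mul_le_mul_of_nonneg_right
              (mul_le_mul h8' hRe (by positivity) (by norm_num)) (by positivity)
        _ = 2 ^ ((7:ℝ) + d) * R ^ β := by
            rw [Real.rpow_add two_pos (7:ℝ) (d:ℝ), Real.rpow_add two_pos (4:ℝ) (d:ℝ),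
              h16, h128]
            ring
        _ ≤ 2 ^ ((7:ℝ) + d) * R ^ β * X ^ β :=
            le_mul_of_one_le_right (by positivity) h1X
    · -- D ≤ 2c + 4 + d - n
      have hD' : (D : ℝ) ≤ 2 * (c:ℝ) + 4 + d - n := by
        have hmax : max (n+1) (c+1) = c + 1 := by omega
        rw [hmax] at hD
        push_cast at hD
        linarith
      have hc0 : (0:ℝ) ≤ (2:ℝ) ^ ((c:ℝ)) := by positivity
      have h2R1 : (1:ℝ) ≤ 2 * R := by linarith
      calc (2:ℝ) ^ (ε * D) ≤ 2 ^ (ε * (2 * (c:ℝ) + 4 + d - n)) :=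
            Real.rpow_le_rpow_of_exponent_le one_le_two
              (mul_le_mul_of_nonneg_left hD' hε.le)
        _ = 2 ^ ((c:ℝ) * (2 * ε)) * 2 ^ ((-(n:ℝ)) * ε) * 2 ^ (ε * (4 + (d:ℝ))) := by
            rw [← Real.rpow_add two_pos, ← Real.rpow_add two_pos]; ring_nf
        _ = ((2:ℝ) ^ ((c:ℝ))) ^ (2 * ε) * ((2:ℝ) ^ (-(n:ℝ))) ^ ε * 2 ^ (ε * (4 + (d:ℝ))) := by
            rw [← Real.rpow_mul (by norm_num), ← Real.rpow_mul (by norm_num)]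
        _ ≤ (2 * R) ^ β * X ^ β * 2 ^ ((4:ℝ) + d) := by
            have hb1 : ((2:ℝ) ^ ((c:ℝ))) ^ (2 * ε) ≤ (2 * R) ^ β := by
              calc ((2:ℝ) ^ ((c:ℝ))) ^ (2 * ε) ≤ (2 * R) ^ (2 * ε) :=
                    Real.rpow_le_rpow hc0 h4.le (by positivity)
                _ ≤ (2 * R) ^ β := Real.rpow_le_rpow_of_exponent_le h2R1 (by linarith)
            have hb2 : ((2:ℝ) ^ (-(n:ℝ))) ^ ε ≤ X ^ β := by
              have hinv : (2:ℝ) ^ (-(n:ℝ)) ≤ 1 / r := by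
                rw [Real.rpow_neg (by norm_num)]
                calc ((2:ℝ) ^ ((n:ℝ)))⁻¹ = 1 / ((2:ℝ) ^ ((n:ℝ))) := (one_div _).symm
                  _ ≤ 1 / r := one_div_le_one_div_of_le hr h1
              calc ((2:ℝ) ^ (-(n:ℝ))) ^ ε ≤ X ^ ε := by
                    refine Real.rpow_le_rpow (by positivity) ?_ hε.le
                    exact le_trans hinv (le_max_right _ _)
                _ ≤ X ^ β := Real.rpow_le_rpow_of_exponent_le hX1 hεβ'
            exact mul_le_mul (mul_le_mul hb1 hb2 (by positivity) (by positivity))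
              (Real.rpow_le_rpow_of_exponent_le one_le_two hed) (by positivity) (by positivity)
        _ ≤ 2 * R ^ β * X ^ β * 2 ^ ((4:ℝ) + d) := by
            have h2Rb : (2 * R) ^ β ≤ 2 * R ^ β := by
              rw [Real.mul_rpow (by norm_num) hR0.le]
              have : (2:ℝ) ^ β ≤ 2 := by
                calc (2:ℝ) ^ β ≤ 2 ^ (1:ℝ) :=
                      Real.rpow_le_rpow_of_exponent_le one_le_two hβ1.le
                  _ = 2 := Real.rpow_one 2
              exact mul_le_mul_of_nonneg_right this (by positivity)
            have hXb : (0:ℝ) ≤ X ^ β := by positivity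
            exact mul_le_mul_of_nonneg_right
              (mul_le_mul_of_nonneg_right h2Rb hXb) (by positivity)
        _ = 2 ^ ((5:ℝ) + d) * R ^ β * X ^ β := by
            rw [Real.rpow_add two_pos (5:ℝ) (d:ℝ), Real.rpow_add two_pos (4:ℝ) (d:ℝ),
              h16, h32]
            ring
        _ ≤ 2 ^ ((7:ℝ) + d) * R ^ β * X ^ β := by
            have : (2:ℝ) ^ ((5:ℝ) + d) ≤ 2 ^ ((7:ℝ) + d) :=
              Real.rpow_le_rpow_of_exponent_le one_le_two (by linarith)
            exact mul_le_mul_of_nonneg_right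
              (mul_le_mul_of_nonneg_right this (by positivity)) (by positivity)
  -- step 2 : combine
  have hbase : ((2:ℝ) ^ ((n:ℝ))) ^ s ≤ 2 ^ s * r ^ s := by
    calc ((2:ℝ) ^ ((n:ℝ))) ^ s ≤ (2 * r) ^ s :=
          Real.rpow_le_rpow (by positivity) h2.le hs.le
      _ = 2 ^ s * r ^ s := Real.mul_rpow (by norm_num) hr.le
  have hcomb : (2:ℝ) ^ ((7:ℝ) + d) * 2 ^ s ≤ 2 ^ ((d:ℝ) + s + 10) := by
    rw [← Real.rpow_add two_pos]
    exact Real.rpow_le_rpow_of_exponent_le one_le_two (by linarith)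
  calc (2:ℝ) ^ (ε * D) * ((2:ℝ) ^ ((n:ℝ))) ^ s
      ≤ (2 ^ ((7:ℝ) + d) * R ^ β * X ^ β) * (2 ^ s * r ^ s) :=
        mul_le_mul key hbase (by positivity) (by positivity)
    _ = (2 ^ ((7:ℝ) + d) * 2 ^ s) * (r ^ s * (R ^ β * X ^ β)) := by ring
    _ ≤ 2 ^ ((d:ℝ) + s + 10) * (r ^ s * (R ^ β * X ^ β)) :=
        mul_le_mul_of_nonneg_right hcomb (by positivity)
    _ = 2 ^ ((d:ℝ) + s + 10) * r ^ s * (R * X) ^ β := by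
        rw [Real.mul_rpow hR0.le hX0]; ring

end Aux

set_option maxHeartbeats 1000000 in
theorem statement10 (d : ℕ) (hd : 1 ≤ d) (s α β : ℝ) (hs0 : 0 < s) (hsd : s < d)
    (hα : 0 < α) (hα1 : α ≤ 1) (hβ : 0 < β) (hβm : β < min α s) :
    ∃ Λ : ℝ, 0 < Λ ∧ ∀ ε : ℝ, 0 < ε → ε ≤ β / 2 →
      ∀ μ : Measure (Euc d),
        (∀ Q : DC d, DensE s μ Q ≤ ENNReal.ofReal ((2 : ℝ) ^ (ε * (gdist Q (Q0 d) : ℝ)))) →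
        IsReasonable s β Λ μ := by
  have hβ1 : β < 1 := lt_of_lt_of_le (lt_of_lt_of_le hβm (min_le_left _ _)) hα1
  refine ⟨2 ^ ((d:ℝ) + s + 10), Real.rpow_pos_of_pos two_pos _, ?_⟩
  intro ε hε hεβ μ hμ x r R hr hR hsub
  set n : ℤ := Int.clog 2 r with hn
  set c : ℤ := Int.clog 2 R with hc
  have hR0 : (0:ℝ) < R := by linarith
  have h1 : r ≤ (2:ℝ) ^ n := by
    have := Int.self_le_zpow_clog (b := 2) one_lt_two r
    simpa using this
  have h2 : (2:ℝ) ^ n < 2 * r := by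
    have hlt := Int.zpow_pred_clog_lt_self (b := 2) (r := r) one_lt_two hr
    have heq : ((2:ℕ):ℝ) ^ (n - 1) = (2:ℝ) ^ n / 2 := by
      push_cast
      rw [zpow_sub₀ (two_ne_zero), zpow_one]
    rw [heq] at hlt
    linarith
  have h3 : R ≤ (2:ℝ) ^ c := by
    have := Int.self_le_zpow_clog (b := 2) one_lt_two R
    simpa using this
  have h4 : (2:ℝ) ^ c < 2 * R := by
    have hlt := Int.zpow_pred_clog_lt_self (b := 2) (r := R) one_lt_two hR0
    have heq : ((2:ℕ):ℝ) ^ (c - 1) = (2:ℝ) ^ c / 2 := by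
      push_cast
      rw [zpow_sub₀ (two_ne_zero), zpow_one]
    rw [heq] at hlt
    linarith
  have hc1 : 1 ≤ c := by
    by_contra hcon
    push_neg at hcon
    have hc0 : c ≤ 0 := by omega
    have : (2:ℝ) ^ c ≤ (2:ℝ) ^ (0:ℤ) := zpow_le_zpow_right₀ one_le_two hc0
    simp only [zpow_zero] at this
    linarith
  have hpow_n : (0:ℝ) < (2:ℝ) ^ n := zpow_pos two_pos n
  have hxR : ‖x‖ < R := by
    have := hsub (mem_ball_self hr)
    rwa [mem_ball_zero_iff] at this
  -- r < 4R
  have hr4 : r < 4 * R := by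
    set e : Euc d := EuclideanSpace.single (⟨0, hd⟩ : Fin d) (1:ℝ) with he_def
    have he : ‖e‖ = 1 := by rw [he_def, EuclideanSpace.norm_single]; norm_num
    set y : Euc d := x + (r/2) • e with hy_def
    have hyx : y - x = (r/2) • e := by rw [hy_def]; abel
    have hynorm : ‖y - x‖ = r / 2 := by
      rw [hyx, norm_smul, he, Real.norm_eq_abs, abs_of_pos (by linarith)]
      ring
    have hy : y ∈ ball x r := by
      rw [mem_ball, dist_eq_norm, hynorm]
      linarith
    have hyR : ‖y‖ < R := by
      have := hsub hy
      rwa [mem_ball_zero_iff] at this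
    have := norm_sub_le y x
    rw [hynorm] at this
    linarith
  -- the dyadic cube Q containing x
  set k : Fin d → ℤ := fun i => ⌊x i / (2:ℝ) ^ n⌋ with hk_def
  set Q : DC d := (n, k) with hQ_def
  have hcube : ∀ i, (2:ℝ) ^ n * (k i : ℝ) ≤ x i ∧ x i < (2:ℝ) ^ n * ((k i : ℝ) + 1) := by
    intro i
    have hfl := Int.floor_le (x i / (2:ℝ) ^ n)
    have hfl2 := Int.lt_floor_add_one (x i / (2:ℝ) ^ n)
    constructor
    · rw [mul_comm, ← le_div_iff₀ hpow_n]
      exact hfl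
    · rw [mul_comm, ← div_lt_iff₀ hpow_n]
      exact hfl2
  -- ball x r ⊆ threeQ Q
  have hball : ball x r ⊆ threeQ Q := by
    intro y hy
    intro i
    have hc_eq : center Q i = (2:ℝ) ^ n * ((k i : ℝ) + 1/2) := rfl
    have hside : side Q = (2:ℝ) ^ n := rfl
    rw [hc_eq, hside]
    have hyx : |y i - x i| ≤ ‖y - x‖ := by
      have := abs_coord_le_norm (y - x) i
      simpa using this
    have hyr : ‖y - x‖ < r := by
      rw [mem_ball, dist_eq_norm] at hy
      exact hy
    have hxc : |x i - (2:ℝ) ^ n * ((k i : ℝ) + 1/2)| ≤ (2:ℝ) ^ n / 2 := by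
      rw [abs_le]
      have := hcube i
      constructor <;> nlinarith [this.1, this.2]
    have htri := abs_sub_le (y i) (x i) ((2:ℝ) ^ n * ((k i : ℝ) + 1/2))
    have : |y i - x i| < r := lt_of_le_of_lt hyx hyr
    nlinarith [htri, hxc]
  -- bound on k
  set K : ℝ := R / (2:ℝ) ^ n + 1 with hK_def
  have hK0 : 0 ≤ K := by positivity
  have hKb : ∀ i, -K ≤ ((Q.2 i : ℤ) : ℝ) ∧ ((Q.2 i : ℤ) : ℝ) ≤ K := by
    intro i
    have hxi : |x i| ≤ ‖x‖ := abs_coord_le_norm x i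
    have hxi1 : x i < R := lt_of_le_of_lt (le_trans (le_abs_self _) hxi) hxR
    have hxi2 : -R < x i := by
      have := neg_abs_le (x i)
      linarith [lt_of_le_of_lt hxi hxR]
    have hQ2 : (Q.2 i : ℝ) = (k i : ℝ) := rfl
    rw [hQ2, hK_def]
    have hcu := hcube i
    constructor
    · have h5 : -R < (2:ℝ) ^ n * ((k i : ℝ) + 1) := lt_trans hxi2 hcu.2
      have hdiv : R / (2:ℝ) ^ n * (2:ℝ) ^ n = R := div_mul_cancel₀ R (ne_of_gt hpow_n)
      have h7 : -(R / (2:ℝ) ^ n) < (k i : ℝ) + 1 := by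
        nlinarith [h5, hdiv, hpow_n]
      linarith
    · have : (2:ℝ) ^ n * (k i : ℝ) < R := lt_of_le_of_lt hcu.1 hxi1
      rw [mul_comm, ← lt_div_iff₀ hpow_n] at this
      linarith
  -- levels
  set m : ℤ := max (n+1) (c+1) + 1 with hm_def
  have hmn : n ≤ m := by omega
  have hm0 : 0 ≤ m := by omega
  set t : ℕ := (m - n).toNat with ht_def
  have ht : (t : ℤ) = m - n := Int.toNat_of_nonneg (by omega)
  -- 2^m > R + 2^n
  have h2m : R + (2:ℝ) ^ n < (2:ℝ) ^ m := by
    have hm1 : m - 1 = max (n+1) (c+1) := by omega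
    have e1 : (2:ℝ) ^ (n+1) ≤ (2:ℝ) ^ (m-1) := by
      rw [hm1]; exact zpow_le_zpow_right₀ one_le_two (le_max_left _ _)
    have e2 : (2:ℝ) ^ (c+1) ≤ (2:ℝ) ^ (m-1) := by
      rw [hm1]; exact zpow_le_zpow_right₀ one_le_two (le_max_right _ _)
    have e3 : (2:ℝ) ^ (n+1) = 2 * (2:ℝ) ^ n := by
      rw [zpow_add_one₀ two_ne_zero]; ring
    have e4 : (2:ℝ) ^ (c+1) = 2 * (2:ℝ) ^ c := by
      rw [zpow_add_one₀ two_ne_zero]; ring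
    have e5 : (2:ℝ) ^ m = 2 * (2:ℝ) ^ (m-1) := by
      rw [show m = (m-1) + 1 by ring, zpow_add_one₀ two_ne_zero]
      ring_nf
    have hc2 : (0:ℝ) < (2:ℝ) ^ c := zpow_pos two_pos c
    have hm2 : (0:ℝ) < (2:ℝ) ^ (m-1) := zpow_pos two_pos (m-1)
    linarith [e1, e2, h3]
  -- K / 2^t < 1
  have hKt : K / 2 ^ t < 1 := by
    have hpt : ((2:ℝ) ^ t : ℝ) = (2:ℝ) ^ ((t:ℤ)) := (zpow_natCast (2:ℝ) t).symm
    rw [div_lt_one (by positivity), hpt, ht, zpow_sub₀ two_ne_zero, hK_def]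
    rw [div_add' _ _ _ (ne_of_gt hpow_n), div_lt_div_iff₀ hpow_n hpow_n]
    nlinarith [h2m, hpow_n]
  -- the ancestor is small
  have hsmall : ∀ i, (dparIter t Q).2 i = 0 ∨ (dparIter t Q).2 i = -1 := by
    intro i
    have hb := dparIter_snd_bound Q K hK0 hKb t i
    have hub : ((dparIter t Q).2 i : ℝ) < 1 := lt_of_le_of_lt hb.2 hKt
    have hlb : (-2:ℝ) < ((dparIter t Q).2 i : ℝ) := by
      have := hb.1
      have h0 : 0 ≤ K / 2 ^ t := by positivity
      nlinarith [hKt]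
    have hub' : (dparIter t Q).2 i < 1 := by exact_mod_cast hub
    have hlb' : (-2:ℤ) < (dparIter t Q).2 i := by exact_mod_cast hlb
    omega
  have hQ1t : 0 ≤ Q.1 + t := by
    have : Q.1 = n := rfl
    omega
  have hdist := gdist_le Q t hQ1t hsmall
  set D : ℕ := gdist Q (Q0 d) with hD_def
  have hD : (D : ℝ) ≤ ((max (n+1) (c+1) + 1 - n : ℤ) : ℝ) + d
      + ((max (n+1) (c+1) + 1 : ℤ) : ℝ) := by
    have hQ1 : (Q.1 : ℝ) = (n : ℝ) := rfl
    have htr : (t : ℝ) = ((m : ℤ) : ℝ) - ((n : ℤ) : ℝ) := by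
      exact_mod_cast congrArg (fun z : ℤ => (z : ℝ)) ht
    rw [hQ1, htr] at hdist
    rw [hm_def] at hdist
    push_cast at hdist ⊢
    linarith
  have hmain := real_estimate d s β ε r R n c D hs0 hβ hβ1 hε hεβ hr hR h1 h2 h3 h4 hr4 hD
  -- measure estimates
  have hside_pos : (0:ℝ) < side Q ^ s := Real.rpow_pos_of_pos hpow_n s
  have hμQ : μ (threeQ Q) ≤ ENNReal.ofReal ((2:ℝ) ^ (ε * (D:ℝ)))
      * ENNReal.ofReal (side Q ^ s) := by
    have hh := hμ Q
    rw [DensE, ENNReal.div_le_iff (ne_of_gt (ENNReal.ofReal_pos.mpr hside_pos))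
      ENNReal.ofReal_ne_top] at hh
    exact hh
  calc μ (ball x r) ≤ μ (threeQ Q) := measure_mono hball
    _ ≤ ENNReal.ofReal ((2:ℝ) ^ (ε * (D:ℝ))) * ENNReal.ofReal (side Q ^ s) := hμQ
    _ = ENNReal.ofReal ((2:ℝ) ^ (ε * (D:ℝ)) * side Q ^ s) :=
        (ENNReal.ofReal_mul (by positivity)).symm
    _ ≤ ENNReal.ofReal (2 ^ ((d:ℝ) + s + 10) * r ^ s * (R * max 1 (1/r)) ^ β) :=
        ENNReal.ofReal_le_ofReal hmain
end
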